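/- Let x, y be coprime integers with x, y > 1, and let ℓ ≥ x and m ≥ y be integers. Set F = (x-1)(y-1) and S = ℓy + mx. Then every integer N with F ≤ N ≤ S - F can be written as N = αy + βx with integers 0 ≤ α ≤ ℓ and 0 ≤ β ≤ m. -/
import Mathlib


theorem stmt_0 (x y ℓ m N : ℤ) (hx : 1 < x) (hy : 1 < y) (hcop : IsCoprime x y)
    (hl : x ≤ ℓ) (hm : y ≤ m)
    (hN1 : (x - 1) * (y - 1) ≤ N) (hN2 : N ≤ ℓ * y + m * x - (x - 1) * (y - 1)) :
    ∃ α β : ℤ, 0 ≤ α ∧ α ≤ ℓ ∧ 0 ≤ β ∧ β ≤ m ∧ N = α * y + β * x := by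
  obtain ⟨a, b, hab⟩ := hcop
  have hx0 : (0:ℤ) < x := by linarith
  have hy0 : (0:ℤ) < y := by linarith
  set q := (N * b) / x with hq
  set α := (N * b) % x with hα
  have hαdef : N * b = x * q + α := (Int.mul_ediv_add_emod (N*b) x).symm
  have hα0 : 0 ≤ α := Int.emod_nonneg _ (by linarith)
  have hαlt : α < x := Int.emod_lt_of_pos _ hx0
  set β := N * a + q * y with hβ
  have hrep : N = α * y + β * x := by
    have h1 : N * (a * x + b * y) = N * 1 := by rw [hab]
    nlinarith [hαdef, h1]
  have hβ0 : 0 ≤ β := by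
    have h2 : β * x = N - α * y := by linarith
    by_contra h
    push_neg at h
    have : β ≤ -1 := by linarith
    nlinarith
  by_cases hcase : β ≤ m
  · exact ⟨α, β, hα0, by linarith, hβ0, hcase, hrep⟩
  · push_neg at hcase
    set t := (β - (m - y + 1)) / y with ht
    set r := (β - (m - y + 1)) % y with hr
    have hdiv : β - (m - y + 1) = y * t + r := (Int.mul_ediv_add_emod _ _).symm
    have hr0 : 0 ≤ r := Int.emod_nonneg _ (by linarith)
    have hrlt : r < y := Int.emod_lt_of_pos _ hy0
    have ht0 : 0 ≤ t := Int.ediv_nonneg (by linarith) (by linarith)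
    refine ⟨α + t * x, β - t * y, by positivity, ?_, ?_, ?_, ?_⟩
    · -- α + t*x ≤ ℓ
      have hb2 : β - t * y = r + (m - y + 1) := by linarith
      have hkey : (α + t * x) * y = N - (β - t * y) * x := by nlinarith [hrep]
      by_contra h
      push_neg at h
      have : ℓ + 1 ≤ α + t * x := by linarith
      nlinarith
    · have hb2 : β - t * y = r + (m - y + 1) := by linarith
      linarith
    · have hb2 : β - t * y = r + (m - y + 1) := by linarith
      linarith
    · nlinarith [hrep]
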